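/- arXiv:1706.04462 — 5 statements merged into one kernel-verified Lean document; each statement's English description precedes it below -/
import Mathlib

section
/- Let $(\lambda_j)_{j\geq 1}$ be a nonnegative, nonincreasing summable sequence. Then for every real $x > 0$, $\sum_{j\geq 0} 2^j \lambda_{\lfloor 2^j x\rfloor} \leq \phi(x) \sum_{j\geq 1}\lambda_j$, where $\phi(x) = \frac{4}{x}$ if $x \geq 1$ and $\phi(x) = \frac{4}{x}(1 - \log_2 x)$ if $0 < x < 1$. -/
/-- Functional version of Cauchy's condensation test: for a nonnegative, nonincreasing,
summable sequence `(λ_j)_{j≥1}` (indexed by the positive integers, extended by `λ_0 = 0`)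
and every `x > 0`, one has `∑_{j≥0} 2^j λ_{⌊2^j x⌋} ≤ φ(x) ∑_{j≥1} λ_j` where
`φ(x) = 4/x` for `x ≥ 1` and `φ(x) = (4/x)(1 - log₂ x)` for `0 < x < 1`. -/
theorem functional_cauchy_condensation (lam : ℕ → ℝ)
    (h0 : lam 0 = 0)
    (hnonneg : ∀ j, 0 ≤ lam j)
    (hmono : ∀ j k, 1 ≤ j → j ≤ k → lam k ≤ lam j)
    (hsum : Summable lam)
    (x : ℝ) (hx : 0 < x) :
    Summable (fun j : ℕ => (2 : ℝ) ^ j * lam (Nat.floor ((2 : ℝ) ^ j * x))) ∧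
      (∑' j : ℕ, (2 : ℝ) ^ j * lam (Nat.floor ((2 : ℝ) ^ j * x))) ≤
        (if 1 ≤ x then 4 / x else 4 / x * (1 - Real.logb 2 x)) * ∑' j : ℕ, lam (j + 1) := by
  set n : ℕ → ℕ := fun j => Nat.floor ((2 : ℝ) ^ j * x) with hn
  set f : ℕ → ℝ := fun j => (2 : ℝ) ^ j * lam (n j) with hf
  have hfnonneg : ∀ j, 0 ≤ f j := fun j => mul_nonneg (by positivity) (hnonneg _)
  have hsum' : Summable (fun i : ℕ => lam (i + 1)) := (summable_nat_add_iff 1).2 hsum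
  set S : ℝ := ∑' j : ℕ, lam (j + 1) with hS
  have hS0 : 0 ≤ S := tsum_nonneg fun i => hnonneg _
  have hx4 : 0 ≤ 4 / x := by positivity
  -- sums over Ioc 0 m are bounded by S
  have hblock : ∀ m : ℕ, ∑ k ∈ Finset.Ioc 0 m, lam k ≤ S := by
    intro m
    have he : ∑ k ∈ Finset.Ioc 0 m, lam k = ∑ i ∈ Finset.range m, lam (i + 1) := by
      induction m with
      | zero => simp
      | succ m ih =>
        rw [Finset.sum_Ioc_succ_top (Nat.zero_le _), ih, Finset.sum_range_succ]
    rw [he]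
    exact Summable.sum_le_tsum _ (fun i _ => hnonneg _) hsum'
  -- doubling of floors
  have hdouble : ∀ i : ℕ, 2 * n i ≤ n (i + 1) := by
    intro i
    apply Nat.le_floor
    have h1 : (n i : ℝ) ≤ (2 : ℝ) ^ i * x := Nat.floor_le (by positivity)
    push_cast
    rw [pow_succ]
    nlinarith
  -- previous endpoint
  set p : ℕ → ℕ := fun j => match j with | 0 => 0 | (i + 1) => n i with hp
  have hple : ∀ j, 2 * p j ≤ n j := by
    intro j
    cases j with
    | zero => simp [hp]
    | succ i => exact hdouble i
  -- key per-term bound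
  have hkey : ∀ j, f j ≤ 4 / x * ∑ k ∈ Finset.Ioc (p j) (n j), lam k := by
    intro j
    by_cases h1 : n j = 0
    · have hp0 : p j = 0 := by have := hple j; omega
      rw [h1, hp0]
      simp [hf, h1, h0]
    · have hn1 : 1 ≤ n j := Nat.one_le_iff_ne_zero.2 h1
      have hfl : (2 : ℝ) ^ j * x < (n j : ℝ) + 1 := Nat.lt_floor_add_one _
      have hcast1 : (1 : ℝ) ≤ (n j : ℝ) := by exact_mod_cast hn1
      have h2n : (2 : ℝ) ^ j * x ≤ 2 * n j := by linarith
      -- sum over block ≥ card * lam (n j)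
      have hcard : (Finset.Ioc (p j) (n j)).card • lam (n j) ≤
          ∑ k ∈ Finset.Ioc (p j) (n j), lam k := by
        apply Finset.card_nsmul_le_sum
        intro k hk
        rw [Finset.mem_Ioc] at hk
        exact hmono k (n j) (Nat.one_le_iff_ne_zero.2 (by omega)) hk.2
      have hpn : p j ≤ n j := le_trans (by omega) (hple j)
      have hcardval : ((Finset.Ioc (p j) (n j)).card : ℝ) = (n j : ℝ) - (p j : ℝ) := by
        rw [Nat.card_Ioc, Nat.cast_sub hpn]
      have hgap : (n j : ℝ) / 2 ≤ (n j : ℝ) - (p j : ℝ) := by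
        have := hple j
        have : (2 : ℝ) * (p j : ℝ) ≤ (n j : ℝ) := by exact_mod_cast this
        linarith
      have hsumge : (n j : ℝ) / 2 * lam (n j) ≤ ∑ k ∈ Finset.Ioc (p j) (n j), lam k := by
        rw [nsmul_eq_mul, hcardval] at hcard
        nlinarith [hnonneg (n j)]
      have hpow : (2 : ℝ) ^ j ≤ 4 / x * ((n j : ℝ) / 2) := by
        rw [div_mul_eq_mul_div, le_div_iff₀ hx]
        nlinarith
      calc f j = (2 : ℝ) ^ j * lam (n j) := rfl
        _ ≤ 4 / x * ((n j : ℝ) / 2) * lam (n j) :=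
            mul_le_mul_of_nonneg_right hpow (hnonneg _)
        _ = 4 / x * ((n j : ℝ) / 2 * lam (n j)) := by ring
        _ ≤ 4 / x * ∑ k ∈ Finset.Ioc (p j) (n j), lam k :=
            mul_le_mul_of_nonneg_left hsumge hx4
  -- partial sums bound
  have hpartial : ∀ J : ℕ, ∑ j ∈ Finset.range (J + 1), f j ≤
      4 / x * ∑ k ∈ Finset.Ioc 0 (n J), lam k := by
    intro J
    induction J with
    | zero => simpa using hkey 0
    | succ J ih =>
      rw [Finset.sum_range_succ]
      have hmn : n J ≤ n (J + 1) := le_trans (by omega) (hdouble J)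
      calc ∑ j ∈ Finset.range (J + 1), f j + f (J + 1)
          ≤ 4 / x * ∑ k ∈ Finset.Ioc 0 (n J), lam k +
            4 / x * ∑ k ∈ Finset.Ioc (n J) (n (J + 1)), lam k := add_le_add ih (hkey (J + 1))
        _ = 4 / x * (∑ k ∈ Finset.Ioc 0 (n J), lam k +
            ∑ k ∈ Finset.Ioc (n J) (n (J + 1)), lam k) := by ring
        _ = 4 / x * ∑ k ∈ Finset.Ioc 0 (n (J + 1)), lam k := by
            rw [Finset.sum_Ioc_consecutive _ (Nat.zero_le _) hmn]
  have hbound : ∀ J : ℕ, ∑ j ∈ Finset.range J, f j ≤ 4 / x * S := by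
    intro J
    cases J with
    | zero => simpa using mul_nonneg hx4 hS0
    | succ J =>
      exact le_trans (hpartial J) (mul_le_mul_of_nonneg_left (hblock _) hx4)
  have hsummable : Summable f := summable_of_sum_range_le hfnonneg hbound
  have htsum : ∑' j, f j ≤ 4 / x * S := Real.tsum_le_of_sum_range_le hfnonneg hbound
  refine ⟨hsummable, ?_⟩
  refine le_trans htsum ?_
  apply mul_le_mul_of_nonneg_right _ hS0
  split_ifs with h
  · exact le_rfl
  · have hlogb : Real.logb 2 x ≤ 0 :=
      Real.logb_nonpos one_lt_two hx.le (le_of_not_ge h)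
    nlinarith [mul_nonneg hx4 (neg_nonneg.2 hlogb)]
end

section
/- Let $0 < p < \infty$ and let $\lambda = (\lambda_j)_{j\geq 1} \in \ell^p(\mathbb{N})$. Then the set of $x \in (0,\infty)$ such that $\sum_{j\geq 0} 2^j |\lambda_{\lfloor 2^j x\rfloor}|^p = \infty$ has Lebesgue measure zero. -/
open MeasureTheory Set
open scoped ENNReal

private lemma dyadic_term_double (p : ℝ) (lam : ℕ → ℝ) (x : ℝ) :
    Summable (fun j : ℕ => (2 : ℝ) ^ j * |lam (Nat.floor ((2 : ℝ) ^ j * (2 * x)))| ^ p) ↔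
    Summable (fun j : ℕ => (2 : ℝ) ^ j * |lam (Nat.floor ((2 : ℝ) ^ j * x))| ^ p) := by
  have h : (fun j : ℕ => (2 : ℝ) ^ j * |lam (Nat.floor ((2 : ℝ) ^ j * (2 * x)))| ^ p)
      = fun j : ℕ => (2 : ℝ)⁻¹ *
        ((2 : ℝ) ^ (j + 1) * |lam (Nat.floor ((2 : ℝ) ^ (j + 1) * x))| ^ p) := by
    funext j
    have hx : (2 : ℝ) ^ j * (2 * x) = (2 : ℝ) ^ (j + 1) * x := by ring
    rw [hx, pow_succ]
    ring
  rw [h, summable_mul_left_iff (by norm_num : (2 : ℝ)⁻¹ ≠ 0)]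
  exact summable_nat_add_iff (f := fun j : ℕ => (2 : ℝ) ^ j * |lam (Nat.floor ((2 : ℝ) ^ j * x))| ^ p) 1

private lemma dyadic_term_pow (p : ℝ) (lam : ℕ → ℝ) (x : ℝ) (k : ℕ) :
    Summable (fun j : ℕ => (2 : ℝ) ^ j * |lam (Nat.floor ((2 : ℝ) ^ j * ((2 : ℝ) ^ k * x)))| ^ p) ↔
    Summable (fun j : ℕ => (2 : ℝ) ^ j * |lam (Nat.floor ((2 : ℝ) ^ j * x))| ^ p) := by
  induction k with
  | zero => simp
  | succ k ih =>
    have e : (2 : ℝ) ^ (k + 1) * x = 2 * ((2 : ℝ) ^ k * x) := by ring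
    rw [e, dyadic_term_double]
    exact ih

private lemma dyadic_null_on_Ico (p : ℝ) (hp : 0 < p) (lam : ℕ → ℝ)
    (hsum : Summable (fun j : ℕ => |lam (j + 1)| ^ p)) :
    volume {x : ℝ | x ∈ Ico (1 : ℝ) 2 ∧
      ¬ Summable (fun j : ℕ => (2 : ℝ) ^ j * |lam (Nat.floor ((2 : ℝ) ^ j * x))| ^ p)} = 0 := by
  classical
  set a : ℕ → ℝ≥0∞ := fun n => ENNReal.ofReal (|lam n| ^ p) with ha
  set f : ℕ → ℝ → ℝ≥0∞ :=
    fun j x => ENNReal.ofReal ((2 : ℝ) ^ j * |lam (Nat.floor ((2 : ℝ) ^ j * x))| ^ p) with hf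
  have hterm_nonneg : ∀ (j : ℕ) (x : ℝ),
      0 ≤ (2 : ℝ) ^ j * |lam (Nat.floor ((2 : ℝ) ^ j * x))| ^ p := fun j x =>
    mul_nonneg (by positivity) (Real.rpow_nonneg (abs_nonneg _) p)
  have hmeas : ∀ j : ℕ, Measurable (f j) := by
    intro j
    have h1 : Measurable fun x : ℝ => |lam (Nat.floor ((2 : ℝ) ^ j * x))| :=
      ((measurable_from_top (f := lam)).comp
        (Nat.measurable_floor.comp (measurable_const_mul _))).abs
    rw [hf]
    fun_prop
  -- per-j integral
  have hInt : ∀ j : ℕ, ∫⁻ x in Ico (1 : ℝ) 2, f j x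
      = ∑ i ∈ Finset.range (2 ^ j), a (2 ^ j + i) := by
    intro j
    have h2j : (0 : ℝ) < 2 ^ j := by positivity
    set S : ℕ → Set ℝ :=
      fun i => Ico (1 + (i : ℝ) / 2 ^ j) (1 + ((i : ℝ) + 1) / 2 ^ j) with hS
    have hSle : ∀ i : ℕ, (1 : ℝ) + (i : ℝ) / 2 ^ j = ((2 : ℝ) ^ j + i) / 2 ^ j := by
      intro i; field_simp
    have hSlt : ∀ i : ℕ, (1 : ℝ) + ((i : ℝ) + 1) / 2 ^ j = ((2 : ℝ) ^ j + i + 1) / 2 ^ j := by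
      intro i; field_simp; ring
    have hcover : Ico (1 : ℝ) 2 = ⋃ i ∈ Finset.range (2 ^ j), S i := by
      ext x
      simp only [hS, mem_Ico, Finset.mem_range, mem_iUnion, exists_prop]
      constructor
      · rintro ⟨h1, h2⟩
        have hx0 : (0 : ℝ) ≤ 2 ^ j * x := by positivity
        set n : ℕ := Nat.floor ((2 : ℝ) ^ j * x) with hn
        have hfl1 : (n : ℝ) ≤ 2 ^ j * x := Nat.floor_le hx0
        have hfl2 : 2 ^ j * x < (n : ℝ) + 1 := Nat.lt_floor_add_one _
        have hge : 2 ^ j ≤ n := by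
          apply Nat.le_floor
          push_cast
          nlinarith
        have hlt : n < 2 ^ j + 2 ^ j := by
          rw [hn, Nat.floor_lt hx0]
          push_cast
          nlinarith
        have hc : ((n - 2 ^ j : ℕ) : ℝ) = (n : ℝ) - 2 ^ j := by
          push_cast [Nat.cast_sub hge]
          ring
        refine ⟨n - 2 ^ j, by omega, ?_, ?_⟩
        · rw [hSle, div_le_iff₀ h2j, hc]
          nlinarith
        · rw [hSlt, lt_div_iff₀ h2j, hc]
          nlinarith
      · rintro ⟨i, hi, h1, h2⟩
        have hi' : (i : ℝ) + 1 ≤ 2 ^ j := by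
          have h := Nat.succ_le_of_lt hi
          have : ((i + 1 : ℕ) : ℝ) ≤ ((2 ^ j : ℕ) : ℝ) := by exact_mod_cast h
          push_cast at this
          linarith
        constructor
        · have : (0 : ℝ) ≤ (i : ℝ) / 2 ^ j := by positivity
          linarith
        · have : ((i : ℝ) + 1) / 2 ^ j ≤ 1 := by
            rw [div_le_one h2j]; exact hi'
          linarith
    have hfloor : ∀ i : ℕ, i < 2 ^ j → ∀ x ∈ S i,
        Nat.floor ((2 : ℝ) ^ j * x) = 2 ^ j + i := by
      intro i hi x hx
      obtain ⟨h1, h2⟩ := hx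
      rw [hSle, div_le_iff₀ h2j] at h1
      rw [hSlt, lt_div_iff₀ h2j] at h2
      have hx0 : (0 : ℝ) ≤ 2 ^ j * x := by nlinarith
      rw [Nat.floor_eq_iff' (n := 2 ^ j + i) (by positivity)]
      push_cast
      constructor <;> nlinarith
    have hdisj : (↑(Finset.range (2 ^ j)) : Set ℕ).PairwiseDisjoint S := by
      have key : ∀ k k' : ℕ, k < k' → Disjoint (S k) (S k') := by
        intro k k' hkk'
        rw [hS]
        apply Set.Ico_disjoint_Ico.mpr
        have hk1 : ((k : ℝ) + 1) / 2 ^ j ≤ (k' : ℝ) / 2 ^ j := by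
          gcongr
          exact_mod_cast hkk'
        calc min (1 + ((k : ℝ) + 1) / 2 ^ j) (1 + ((k' : ℝ) + 1) / 2 ^ j)
            ≤ 1 + ((k : ℝ) + 1) / 2 ^ j := min_le_left _ _
          _ ≤ 1 + (k' : ℝ) / 2 ^ j := by linarith
          _ ≤ max (1 + (k : ℝ) / 2 ^ j) (1 + (k' : ℝ) / 2 ^ j) := le_max_right _ _
      intro i _ i' _ hne
      rcases hne.lt_or_gt with h | h
      · exact key i i' h
      · exact (key i' i h).symm
    calc ∫⁻ x in Ico (1 : ℝ) 2, f j x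
        = ∫⁻ x in ⋃ i ∈ Finset.range (2 ^ j), S i, f j x := by rw [hcover]
      _ = ∑ i ∈ Finset.range (2 ^ j), ∫⁻ x in S i, f j x :=
          lintegral_biUnion_finset hdisj (fun i _ => measurableSet_Ico) _
      _ = ∑ i ∈ Finset.range (2 ^ j), a (2 ^ j + i) := by
          refine Finset.sum_congr rfl fun i hi => ?_
          have hic : i < 2 ^ j := Finset.mem_range.mp hi
          have hconst : ∫⁻ x in S i, f j x
              = ∫⁻ _ in S i, ENNReal.ofReal ((2 : ℝ) ^ j * |lam (2 ^ j + i)| ^ p) := by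
            apply setLIntegral_congr_fun measurableSet_Ico
            intro x hx
            rw [hf]
            simp only
            rw [hfloor i hic x hx]
          rw [hconst, setLIntegral_const, hS]
          simp only
          rw [Real.volume_Ico]
          have hlen : (1 + ((i : ℝ) + 1) / 2 ^ j) - (1 + (i : ℝ) / 2 ^ j) = ((2 : ℝ) ^ j)⁻¹ := by
            field_simp
            ring
          rw [hlen, ← ENNReal.ofReal_mul (hterm_nonneg j 0 |>.trans_eq rfl |> fun _ => by positivity)]
          rw [ha]
          congr 1
          rw [mul_comm ((2 : ℝ) ^ j) (|lam (2 ^ j + i)| ^ p), mul_assoc,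
            mul_inv_cancel₀ (ne_of_gt h2j), mul_one]
  -- total bound
  have hT : (∑' n : ℕ, a (n + 1)) ≠ ⊤ := by
    rw [ha]
    simp only
    rw [← ENNReal.ofReal_tsum_of_nonneg (fun n => Real.rpow_nonneg (abs_nonneg _) p) hsum]
    exact ENNReal.ofReal_ne_top
  have hSum_le : (∑' j : ℕ, ∑ i ∈ Finset.range (2 ^ j), a (2 ^ j + i)) ≤ ∑' n : ℕ, a (n + 1) := by
    rw [ENNReal.tsum_eq_iSup_nat]
    apply iSup_le
    intro J
    have hpart : ∑ j ∈ Finset.range J, ∑ i ∈ Finset.range (2 ^ j), a (2 ^ j + i)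
        = ∑ n ∈ Finset.Ico 1 (2 ^ J), a n := by
      induction J with
      | zero => simp
      | succ J ih =>
        rw [Finset.sum_range_succ, ih]
        have hpow : 2 ^ (J + 1) - 2 ^ J = 2 ^ J := by
          rw [pow_succ]; omega
        have h1 : ∑ i ∈ Finset.range (2 ^ J), a (2 ^ J + i)
            = ∑ n ∈ Finset.Ico (2 ^ J) (2 ^ (J + 1)), a n := by
          rw [Finset.sum_Ico_eq_sum_range, hpow]
        rw [h1, Finset.sum_Ico_consecutive]
        · exact Nat.one_le_two_pow
        · exact Nat.pow_le_pow_right (by norm_num) (Nat.le_succ J)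
    rw [hpart, Finset.sum_Ico_eq_sum_range]
    calc ∑ i ∈ Finset.range (2 ^ J - 1), a (1 + i)
        = ∑ i ∈ Finset.range (2 ^ J - 1), a (i + 1) := by
          refine Finset.sum_congr rfl fun i _ => ?_
          rw [add_comm]
      _ ≤ ∑' n : ℕ, a (n + 1) := ENNReal.sum_le_tsum _
  have hIntF : (∫⁻ x in Ico (1 : ℝ) 2, ∑' j : ℕ, f j x) ≠ ⊤ := by
    rw [lintegral_tsum fun j => (hmeas j).aemeasurable]
    refine ne_top_of_le_ne_top hT ?_
    calc (∑' j : ℕ, ∫⁻ x in Ico (1 : ℝ) 2, f j x)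
        = ∑' j : ℕ, ∑ i ∈ Finset.range (2 ^ j), a (2 ^ j + i) := tsum_congr hInt
      _ ≤ ∑' n : ℕ, a (n + 1) := hSum_le
  have hae : ∀ᵐ x ∂(volume.restrict (Ico (1 : ℝ) 2)), (∑' j : ℕ, f j x) < ⊤ :=
    ae_lt_top (Measurable.ennreal_tsum hmeas) hIntF
  have hsub : {x : ℝ | x ∈ Ico (1 : ℝ) 2 ∧
      ¬ Summable (fun j : ℕ => (2 : ℝ) ^ j * |lam (Nat.floor ((2 : ℝ) ^ j * x))| ^ p)}
      ⊆ {x : ℝ | ¬ (∑' j : ℕ, f j x) < ⊤} ∩ Ico (1 : ℝ) 2 := by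
    rintro x ⟨hx, hns⟩
    refine ⟨fun hlt => hns ?_, hx⟩
    have h := ENNReal.summable_toReal hlt.ne
    refine h.congr fun j => ?_
    rw [hf]
    simp only
    rw [ENNReal.toReal_ofReal (hterm_nonneg j x)]
  refine measure_mono_null hsub ?_
  rw [← Measure.restrict_apply' measurableSet_Ico]
  exact ae_iff.mp hae

/-- For `0 < p < ∞` and `λ ∈ ℓ^p` (indexed by the positive integers), the set of `x > 0` for
which `∑_{j≥0} 2^j |λ_{⌊2^j x⌋}|^p` diverges has Lebesgue measure zero. -/
theorem ae_summable_dyadic_orbit (p : ℝ) (hp : 0 < p) (lam : ℕ → ℝ)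
    (hsum : Summable (fun j : ℕ => |lam (j + 1)| ^ p)) :
    MeasureTheory.volume
      {x : ℝ | 0 < x ∧
        ¬ Summable (fun j : ℕ => (2 : ℝ) ^ j * |lam (Nat.floor ((2 : ℝ) ^ j * x))| ^ p)} = 0 := by
  have hN := dyadic_null_on_Ico p hp lam hsum
  set N := {x : ℝ | x ∈ Ico (1 : ℝ) 2 ∧
    ¬ Summable (fun j : ℕ => (2 : ℝ) ^ j * |lam (Nat.floor ((2 : ℝ) ^ j * x))| ^ p)} with hNdef
  refine measure_mono_null
    (?_ : _ ⊆ ⋃ k : ℤ, (fun x : ℝ => (2 : ℝ) ^ (-k) * x) ⁻¹' N) ?_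
  · rintro x ⟨hx, hns⟩
    set k : ℤ := Int.log 2 x with hk
    have hpow : (0 : ℝ) < (2 : ℝ) ^ k := zpow_pos (by norm_num) _
    have hpow' : (0 : ℝ) < (2 : ℝ) ^ (-k) := zpow_pos (by norm_num) _
    have h1 : (2 : ℝ) ^ k ≤ x := by
      have := Int.zpow_log_le_self (b := 2) (by norm_num) hx
      push_cast at this
      exact this
    have h2 : x < (2 : ℝ) ^ (k + 1) := by
      have := Int.lt_zpow_succ_log_self (b := 2) (by norm_num) x
      push_cast at this
      exact this
    refine mem_iUnion.mpr ⟨k, ?_⟩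
    show (2 : ℝ) ^ (-k) * x ∈ N
    rw [hNdef]
    refine ⟨⟨?_, ?_⟩, ?_⟩
    · rw [zpow_neg, inv_mul_eq_div, le_div_iff₀ hpow, one_mul]
      exact h1
    · rw [zpow_neg, inv_mul_eq_div, div_lt_iff₀ hpow]
      calc x < (2 : ℝ) ^ (k + 1) := h2
        _ = 2 * (2 : ℝ) ^ k := by rw [zpow_add_one₀ (by norm_num : (2:ℝ) ≠ 0)]; ring
    · intro hsum'
      apply hns
      rcases le_or_gt 0 k with hk0 | hk0
      · have hxy : (2 : ℝ) ^ k.toNat * ((2 : ℝ) ^ (-k) * x) = x := by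
          rw [← mul_assoc, ← zpow_natCast (2 : ℝ) k.toNat, Int.toNat_of_nonneg hk0,
            ← zpow_add₀ (by norm_num : (2:ℝ) ≠ 0), add_neg_cancel, zpow_zero, one_mul]
        have h := (dyadic_term_pow p lam ((2 : ℝ) ^ (-k) * x) k.toNat).mpr hsum'
        rw [hxy] at h
        exact h
      · have hxy : (2 : ℝ) ^ (-k).toNat * x = (2 : ℝ) ^ (-k) * x := by
          rw [← zpow_natCast (2 : ℝ) (-k).toNat, Int.toNat_of_nonneg (by omega)]
        have h := dyadic_term_pow p lam x (-k).toNat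
        rw [hxy] at h
        exact h.mp hsum'
  · apply measure_iUnion_null
    intro k
    have hne : ((2 : ℝ) ^ (-k)) ≠ 0 := (zpow_pos (by norm_num : (0:ℝ) < 2) _).ne'
    have hq : Measure.QuasiMeasurePreserving (fun x : ℝ => (2 : ℝ) ^ (-k) * x)
        volume volume := by
      refine ⟨measurable_const_mul _, ?_⟩
      rw [Real.map_volume_mul_left hne]
      exact Measure.AbsolutelyContinuous.rfl.smul_left _
    exact hq.preimage_null hN
end

section
/- There exists a sequence $(\zeta_k)_{k\geq 0}$ of nonnegative reals satisfying $\sup_{j\geq 0}\big(2^{-j}\sum_{2^j \leq k < 2^{j+1}} \zeta_k\big) \leq 1$, and such that $\sup_{j\geq 0} \zeta_{\lfloor 2^j x\rfloor} = \infty$ for all $x \in [1,2)$. -/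
/-- The spike sequence: on dyadic block `j = 2^m + t` with `1 ≤ m`, `t < 2m`,
the value `m` sits on the subinterval `[2^j + t·2^j/(2m), 2^j + (t+1)·2^j/(2m) + 1)`. -/
noncomputable def zetaSeq (k : ℕ) : ℝ :=
  if 1 ≤ Nat.log 2 (Nat.log 2 k) ∧
      Nat.log 2 k - 2 ^ Nat.log 2 (Nat.log 2 k) < 2 * Nat.log 2 (Nat.log 2 k) ∧
      2 ^ Nat.log 2 k + (Nat.log 2 k - 2 ^ Nat.log 2 (Nat.log 2 k)) * 2 ^ Nat.log 2 k /
        (2 * Nat.log 2 (Nat.log 2 k)) ≤ k ∧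
      k < 2 ^ Nat.log 2 k + (Nat.log 2 k - 2 ^ Nat.log 2 (Nat.log 2 k) + 1) * 2 ^ Nat.log 2 k /
        (2 * Nat.log 2 (Nat.log 2 k)) + 1
  then (Nat.log 2 (Nat.log 2 k) : ℝ) else 0

lemma zetaSeq_nonneg (k : ℕ) : 0 ≤ zetaSeq k := by
  unfold zetaSeq
  split <;> positivity

lemma two_mul_le_two_pow {m : ℕ} (hm : 1 ≤ m) : 2 * m ≤ 2 ^ m := by
  induction m with
  | zero => omega
  | succ n ih =>
    by_cases hn : n = 0
    · subst hn; norm_num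
    · have h1 : 1 ≤ n := by omega
      have h3 := ih h1
      have h2 : 2 ≤ 2 ^ n := by
        calc 2 = 2 ^ 1 := by norm_num
          _ ≤ 2 ^ n := Nat.pow_le_pow_right (by norm_num) h1
      calc 2 * (n + 1) = 2 * n + 2 := by ring
        _ ≤ 2 ^ n + 2 ^ n := by omega
        _ = 2 ^ (n + 1) := by ring

lemma four_mul_le {m j : ℕ} (hm : 1 ≤ m) (hj : 2 ^ m ≤ j) : 4 * m ≤ 2 ^ j := by
  have h1 : 2 * m ≤ 2 ^ m := two_mul_le_two_pow hm
  have h2 : m + 1 ≤ 2 ^ m := (Nat.lt_two_pow_self (n := m))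
  have h4 : 2 ^ (m + 1) ≤ 2 ^ j := Nat.pow_le_pow_right (by norm_num) (le_trans h2 hj)
  have h5 : 4 * m ≤ 2 ^ (m + 1) := by
    calc 4 * m = 2 * (2 * m) := by ring
      _ ≤ 2 * 2 ^ m := by omega
      _ = 2 ^ (m + 1) := by ring
  omega

lemma nat_lt_div_succ_mul (n d : ℕ) (hd : 0 < d) : n < (n / d + 1) * d := by
  have h1 := Nat.div_add_mod n d
  have h2 := Nat.mod_lt n hd
  calc n = d * (n / d) + n % d := h1.symm
    _ < d * (n / d) + d := by omega
    _ = (n / d + 1) * d := by ring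

lemma nat_add_div_le (x y d : ℕ) : (x + y) / d ≤ x / d + y / d + 1 := by
  rcases Nat.eq_zero_or_pos d with h | h
  · simp [h]
  have : (x + y) / d < x / d + y / d + 2 := by
    rw [Nat.div_lt_iff_lt_mul h]
    have hx := nat_lt_div_succ_mul x d h
    have hy := nat_lt_div_succ_mul y d h
    calc x + y < (x / d + 1) * d + (y / d + 1) * d := by omega
      _ = (x / d + y / d + 2) * d := by ring
  omega

lemma nat_lt_div_succ (n d : ℕ) (hd : 0 < d) : (n : ℝ) / d < (n / d : ℕ) + 1 := by
  have h := nat_lt_div_succ_mul n d hd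
  have hdr : (0 : ℝ) < d := by exact_mod_cast hd
  rw [div_lt_iff₀ hdr]
  have := (Nat.cast_lt (α := ℝ)).mpr h
  push_cast at this ⊢
  linarith

/-- There is a nonnegative sequence `(ζ_k)` whose dyadic block averages are bounded by `1`,
but such that `sup_{j≥0} ζ_{⌊2^j x⌋} = ∞` for every `x ∈ [1,2)`. -/
theorem exists_block_bounded_orbit_unbounded :
    ∃ ζ : ℕ → ℝ, (∀ k, 0 ≤ ζ k) ∧
      (∀ j : ℕ, (1 / (2 : ℝ) ^ j) * ∑ k ∈ Finset.Ico (2 ^ j) (2 ^ (j + 1)), ζ k ≤ 1) ∧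
      ∀ x ∈ Set.Ico (1 : ℝ) 2, ∀ M : ℝ, ∃ j : ℕ, M < ζ (Nat.floor ((2 : ℝ) ^ j * x)) := by
  refine ⟨zetaSeq, zetaSeq_nonneg, ?_, ?_⟩
  · -- block averages bounded by 1
    intro j
    set m := Nat.log 2 j with hmdef
    set t := j - 2 ^ m with htdef
    have hlog : ∀ k ∈ Finset.Ico (2 ^ j) (2 ^ (j + 1)), Nat.log 2 k = j := by
      intro k hk
      rw [Finset.mem_Ico] at hk
      exact Nat.log_eq_of_pow_le_of_lt_pow hk.1 hk.2
    by_cases hcond : 1 ≤ m ∧ t < 2 * m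
    · -- active block
      set a := 2 ^ j + t * 2 ^ j / (2 * m) with hadef
      set b := 2 ^ j + (t + 1) * 2 ^ j / (2 * m) + 1 with hbdef
      have hval : ∀ k ∈ Finset.Ico (2 ^ j) (2 ^ (j + 1)),
          zetaSeq k = if k ∈ Finset.Ico a b then (m : ℝ) else 0 := by
        intro k hk
        unfold zetaSeq
        simp only [hlog k hk, ← hmdef, ← htdef, ← hadef, Finset.mem_Ico]
        rcases hcond with ⟨h1, h2⟩
        by_cases h : a ≤ k ∧ k < b
        · rw [if_pos ⟨h1, h2, h.1, by omega⟩, if_pos h]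
        · rw [if_neg (by tauto), if_neg h]
      rw [Finset.sum_congr rfl hval, Finset.sum_ite_mem]
      have hsum : ∑ k ∈ Finset.Ico (2 ^ j) (2 ^ (j + 1)) ∩ Finset.Ico a b, (m : ℝ)
          ≤ (b - a : ℕ) * m := by
        rw [Finset.sum_const, nsmul_eq_mul]
        have hcard : (Finset.Ico (2 ^ j) (2 ^ (j + 1)) ∩ Finset.Ico a b).card ≤ b - a := by
          calc (Finset.Ico (2 ^ j) (2 ^ (j + 1)) ∩ Finset.Ico a b).card
              ≤ (Finset.Ico a b).card := Finset.card_le_card Finset.inter_subset_right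
            _ = b - a := Nat.card_Ico a b
        exact mul_le_mul_of_nonneg_right (by exact_mod_cast hcard) (by positivity)
      -- nat inequality : (b - a) * m ≤ 2 ^ j
      have hnat : (b - a) * m ≤ 2 ^ j := by
        rcases hcond with ⟨h1, h2⟩
        have hjge : 2 ^ m ≤ j := by
          rcases Nat.eq_zero_or_pos j with hj0 | hj0
          · simp [hmdef, hj0] at h1
          · exact Nat.pow_log_le_self 2 (by omega)
        have h4m : 4 * m ≤ 2 ^ j := four_mul_le h1 hjge
        set u := t * 2 ^ j / (2 * m) with hu
        set v := (t + 1) * 2 ^ j / (2 * m) with hv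
        set w := 2 ^ j / (2 * m) with hw
        have hF1 : v ≤ u + w + 1 := by
          have h := nat_add_div_le (t * 2 ^ j) (2 ^ j) (2 * m)
          have he : (t + 1) * 2 ^ j = t * 2 ^ j + 2 ^ j := by ring
          rw [hv, he]
          exact h
        have hF2 : m * w ≤ 2 ^ j / 2 := by
          rw [hw, ← Nat.div_div_eq_div_mul, mul_comm]
          exact Nat.div_mul_le_self (2 ^ j / 2) m
        have hF3 : 2 * m ≤ 2 ^ j / 2 :=
          Nat.le_div_iff_mul_le (by norm_num) |>.mpr (by omega)
        have huv : u ≤ v := by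
          apply Nat.div_le_div_right
          exact Nat.mul_le_mul_right _ (Nat.le_succ t)
        have h0u : 0 ≤ u := Nat.zero_le _
        have h0v : 0 ≤ v := Nat.zero_le _
        have h0w : 0 ≤ w := Nat.zero_le _
        have hba : b - a ≤ w + 2 := by rw [hbdef, hadef]; omega
        have key : m * w + 2 * m ≤ 2 ^ j := by
          have h2j2 : 2 ^ j / 2 * 2 ≤ 2 ^ j := Nat.div_mul_le_self _ 2
          have gen : ∀ p mm h A : ℕ, p ≤ h → 2 * mm ≤ h → h * 2 ≤ A → p + 2 * mm ≤ A := by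
            intro p mm h A hp hmm hA
            omega
          exact gen (m * w) m (2 ^ j / 2) (2 ^ j) hF2 hF3 h2j2
        calc (b - a) * m ≤ (w + 2) * m := Nat.mul_le_mul_right m hba
          _ = m * w + 2 * m := by ring
          _ ≤ 2 ^ j := key
      have h2j : (0 : ℝ) < 2 ^ j := by positivity
      rw [one_div, inv_mul_le_iff₀ h2j, mul_one]
      calc ∑ k ∈ Finset.Ico (2 ^ j) (2 ^ (j + 1)) ∩ Finset.Ico a b, (m : ℝ)
          ≤ (b - a : ℕ) * m := hsum
        _ ≤ ((2 ^ j : ℕ) : ℝ) := by exact_mod_cast hnat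
        _ = (2 : ℝ) ^ j := by push_cast; ring
    · -- inactive block : all zero
      have hval : ∀ k ∈ Finset.Ico (2 ^ j) (2 ^ (j + 1)), zetaSeq k = 0 := by
        intro k hk
        unfold zetaSeq
        simp only [hlog k hk, ← hmdef, ← htdef]
        rw [if_neg (by tauto)]
      rw [Finset.sum_congr rfl hval]
      simp
  · -- orbit unbounded
    rintro x ⟨hx1, hx2⟩ M
    obtain ⟨m, hm1, hMm⟩ : ∃ m : ℕ, 1 ≤ m ∧ M < (m : ℝ) := by
      refine ⟨⌈M⌉₊ + 1, by omega, ?_⟩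
      calc M ≤ (⌈M⌉₊ : ℝ) := Nat.le_ceil M
        _ < ((⌈M⌉₊ + 1 : ℕ) : ℝ) := by exact_mod_cast Nat.lt_succ_self _
    have hx1' : (0 : ℝ) ≤ x - 1 := by linarith
    have hmR : (1 : ℝ) ≤ (m : ℝ) := by exact_mod_cast hm1
    have hmpos : (0 : ℝ) < 2 * m := by linarith
    set t := ⌊2 * (m : ℝ) * (x - 1)⌋₊ with htdef
    have ht2m : t < 2 * m := by
      rw [htdef, Nat.floor_lt (by positivity)]
      push_cast
      nlinarith
    have htle : (t : ℝ) ≤ 2 * m * (x - 1) := Nat.floor_le (by positivity)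
    have htlt : 2 * (m : ℝ) * (x - 1) < t + 1 := Nat.lt_floor_add_one _
    set j := 2 ^ m + t with hjdef
    refine ⟨j, ?_⟩
    have h2jpos : (0 : ℝ) < 2 ^ j := by positivity
    set k := ⌊(2 : ℝ) ^ j * x⌋₊ with hkdef
    have hk1 : 2 ^ j ≤ k := by
      apply Nat.le_floor
      push_cast
      nlinarith
    have hkle : (k : ℝ) ≤ 2 ^ j * x := Nat.floor_le (by positivity)
    have hk2 : k < 2 ^ (j + 1) := by
      have hr : (2 : ℝ) ^ j * x < 2 ^ (j + 1) := by
        rw [pow_succ]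
        nlinarith
      have hklt : (k : ℝ) < ((2 ^ (j + 1) : ℕ) : ℝ) := by push_cast; linarith
      exact_mod_cast hklt
    have hlogk : Nat.log 2 k = j := Nat.log_eq_of_pow_le_of_lt_pow hk1 hk2
    have hlogj : Nat.log 2 j = m := by
      apply Nat.log_eq_of_pow_le_of_lt_pow
      · omega
      · have h1 := two_mul_le_two_pow hm1
        have h2 : j < 2 ^ m + 2 ^ m := by omega
        calc j < 2 ^ m + 2 ^ m := h2
          _ = 2 ^ (m + 1) := by ring
    have htj : j - 2 ^ m = t := by omega
    -- lower interval bound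
    have ha : 2 ^ j + t * 2 ^ j / (2 * m) ≤ k := by
      apply Nat.le_floor
      have h1 : ((t * 2 ^ j / (2 * m) : ℕ) : ℝ) ≤ ((t * 2 ^ j : ℕ) : ℝ) / ((2 * m : ℕ) : ℝ) :=
        Nat.cast_div_le
      have h2 : ((t * 2 ^ j : ℕ) : ℝ) / ((2 * m : ℕ) : ℝ) ≤ (x - 1) * 2 ^ j := by
        rw [div_le_iff₀ (by push_cast; positivity)]
        push_cast
        nlinarith [mul_le_mul_of_nonneg_right htle h2jpos.le]
      push_cast
      push_cast at h1 h2
      linarith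
    -- upper interval bound
    have hb : k < 2 ^ j + (t + 1) * 2 ^ j / (2 * m) + 1 := by
      have h1 : ((t + 1) * 2 ^ j : ℕ) / ((2 * m : ℕ) : ℝ) <
          (((t + 1) * 2 ^ j / (2 * m) : ℕ) : ℝ) + 1 :=
        nat_lt_div_succ _ _ (by omega)
      have h2 : (x - 1) * 2 ^ j ≤ ((t + 1) * 2 ^ j : ℕ) / ((2 * m : ℕ) : ℝ) := by
        rw [le_div_iff₀ (by push_cast; positivity)]
        push_cast
        nlinarith [mul_le_mul_of_nonneg_right htlt.le h2jpos.le]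
      have hR : (k : ℝ) < ((2 ^ j + (t + 1) * 2 ^ j / (2 * m) + 1 : ℕ) : ℝ) := by
        push_cast
        push_cast at h1 h2
        nlinarith
      exact_mod_cast hR
    have hz : zetaSeq k = m := by
      unfold zetaSeq
      rw [hlogk, hlogj, htj, if_pos ⟨hm1, ht2m, ha, hb⟩]
    rw [hz]
    exact hMm
end

section
/- Let $0 < p < q \leq \infty$. Then there exists a doubly indexed sequence $(\lambda_{j,k})_{j,k\geq 0}$ of nonnegative reals such that $\big(\sum_{j\geq 0}\big(\sum_{k\geq 0}\lambda_{j,k}^p\big)^{q/p}\big)^{1/q} < \infty$ (with the supremum over $j$ of the inner sums if $q = \infty$), and $\sup_{j\geq 0} 2^{j/p}\lambda_{j,\lfloor 2^j x\rfloor} = \infty$ for all $x \in [1,2)$. -/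
open scoped ENNReal

/-- The double sequence: at level `j` with `m = Nat.log2 j`, the value `(m / 2^j)^(1/p)`
on the block of `k` with `k / 2^(j-m) = j`, and `0` elsewhere. -/
noncomputable def blamAux (p : ℝ) (j k : ℕ) : ℝ :=
  if k / 2 ^ (j - Nat.log2 j) = j then ((Nat.log2 j : ℝ) / 2 ^ j) ^ p⁻¹ else 0

lemma log2_spec {m j : ℕ} (h1 : 2 ^ m ≤ j) (h2 : j < 2 ^ (m + 1)) : Nat.log2 j = m := by
  rw [Nat.log2_eq_log_two]
  exact Nat.log_eq_of_pow_le_of_lt_pow h1 h2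

lemma blamAux_inner (p : ℝ) (hp : 0 < p) (j : ℕ) :
    ∑' k : ℕ, ENNReal.ofReal (blamAux p j k ^ p)
      = ENNReal.ofReal ((Nat.log2 j : ℝ) / 2 ^ Nat.log2 j) := by
  set m := Nat.log2 j with hm
  set n := j - m with hn
  have hmj : m ≤ j := Nat.log2_le_self j
  have hnm : n + m = j := Nat.sub_add_cancel hmj
  have hpos : (0 : ℕ) < 2 ^ n := Nat.pow_pos (by norm_num)
  have hval : ∀ k, ENNReal.ofReal (blamAux p j k ^ p)
      = if k / 2 ^ n = j then ENNReal.ofReal ((m : ℝ) / 2 ^ j) else 0 := by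
    intro k
    unfold blamAux
    rw [← hm, ← hn]
    split_ifs with h
    · rw [Real.rpow_inv_rpow (by positivity) hp.ne']
    · rw [Real.zero_rpow hp.ne', ENNReal.ofReal_zero]
  simp_rw [hval]
  rw [tsum_eq_sum (s := Finset.Ico (j * 2 ^ n) ((j + 1) * 2 ^ n))
    (by
      intro k hk
      rw [Finset.mem_Ico] at hk
      push_neg at hk
      rw [if_neg]
      rcases lt_or_ge k (j * 2 ^ n) with h | h
      · exact Nat.ne_of_lt ((Nat.div_lt_iff_lt_mul hpos).mpr h)
      · have : j + 1 ≤ k / 2 ^ n := (Nat.le_div_iff_mul_le hpos).mpr (hk h)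
        omega)]
  have hsum : (∑ k ∈ Finset.Ico (j * 2 ^ n) ((j + 1) * 2 ^ n),
      if k / 2 ^ n = j then ENNReal.ofReal ((m : ℝ) / 2 ^ j) else 0)
      = ∑ _k ∈ Finset.Ico (j * 2 ^ n) ((j + 1) * 2 ^ n), ENNReal.ofReal ((m : ℝ) / 2 ^ j) := by
    refine Finset.sum_congr rfl (fun k hk => ?_)
    rw [Finset.mem_Ico] at hk
    exact if_pos (Nat.div_eq_of_lt_le hk.1 hk.2)
  rw [hsum, Finset.sum_const, Nat.card_Ico]
  have hcard : (j + 1) * 2 ^ n - j * 2 ^ n = 2 ^ n := by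
    rw [Nat.succ_mul]; omega
  rw [hcard, nsmul_eq_mul]
  rw [show ((2 ^ n : ℕ) : ℝ≥0∞) = ENNReal.ofReal ((2 : ℝ) ^ n) by
    rw [← ENNReal.ofReal_natCast]; push_cast; ring_nf]
  rw [← ENNReal.ofReal_mul (by positivity)]
  congr 1
  rw [← hnm, pow_add]
  have h2n : (0 : ℝ) < 2 ^ n := by positivity
  have h2m : (0 : ℝ) < 2 ^ m := by positivity
  field_simp

/-- Regrouping a sum over `j` of a quantity depending only on `Nat.log2 j`. -/
lemma regroup (T : ℕ → ℝ≥0∞) (hT0 : T 0 = 0) :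
    ∑' j : ℕ, T (Nat.log2 j) = ∑' m : ℕ, 2 ^ m * T m := by
  have key : ∀ j : ℕ, T (Nat.log2 j)
      = ∑' m : ℕ, if j ∈ Finset.Ico (2 ^ m) (2 ^ (m + 1)) then T m else 0 := by
    intro j
    rcases eq_or_ne j 0 with rfl | hj
    · have hl0 : Nat.log2 0 = 0 := by rw [Nat.log2_eq_log_two, Nat.log_zero_right]
      rw [hl0, hT0]
      symm
      convert tsum_zero with m
      split_ifs with h
      · rw [Finset.mem_Ico] at h
        exact absurd h.1 (pow_pos (by norm_num : (0:ℕ) < 2) m).not_ge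
      · rfl
    · symm
      rw [tsum_eq_single (Nat.log2 j) (fun m' hm' => by
        rw [if_neg]
        intro hmem
        rw [Finset.mem_Ico] at hmem
        exact hm' (log2_spec hmem.1 hmem.2).symm)]
      rw [if_pos]
      rw [Finset.mem_Ico]
      exact ⟨Nat.log2_self_le hj, Nat.lt_log2_self⟩
  calc ∑' j : ℕ, T (Nat.log2 j)
      = ∑' (j : ℕ) (m : ℕ), if j ∈ Finset.Ico (2 ^ m) (2 ^ (m + 1)) then T m else 0 := by
        exact tsum_congr key
    _ = ∑' (m : ℕ) (j : ℕ), if j ∈ Finset.Ico (2 ^ m) (2 ^ (m + 1)) then T m else 0 :=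
        ENNReal.tsum_comm
    _ = ∑' m : ℕ, 2 ^ m * T m := by
        refine tsum_congr (fun m => ?_)
        rw [tsum_eq_sum (s := Finset.Ico (2 ^ m) (2 ^ (m + 1))) (fun b hb => if_neg hb)]
        rw [Finset.sum_congr rfl (fun j hj => if_pos hj), Finset.sum_const, Nat.card_Ico]
        have : 2 ^ (m + 1) - 2 ^ m = 2 ^ m := by rw [pow_succ]; omega
        rw [this, nsmul_eq_mul]
        push_cast
        ring

/-- Summability of `∑ m, 2^m (m/2^m)^r` for `r > 1`. -/
lemma geo_sum (r : ℝ) (hr : 1 < r) :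
    ∑' m : ℕ, ENNReal.ofReal ((2 : ℝ) ^ m * ((m : ℝ) / 2 ^ m) ^ r) < ⊤ := by
  have hr0 : 0 < r := lt_trans one_pos hr
  set x : ℝ := (2 : ℝ) ^ (1 - r) with hx
  have hx0 : 0 < x := Real.rpow_pos_of_pos (by norm_num) _
  have hx1 : x < 1 := Real.rpow_lt_one_of_one_lt_of_neg (by norm_num) (by linarith)
  have hterm : ∀ m : ℕ, (2 : ℝ) ^ m * ((m : ℝ) / 2 ^ m) ^ r = (m : ℝ) ^ r * x ^ m := by
    intro m
    have h2m : (0 : ℝ) < 2 ^ m := by positivity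
    rw [Real.div_rpow (Nat.cast_nonneg m) h2m.le]
    have hxpow : x ^ m = 2 ^ m / ((2 : ℝ) ^ m) ^ r := by
      rw [hx, ← Real.rpow_natCast ((2 : ℝ) ^ (1 - r)) m,
        ← Real.rpow_mul (by norm_num : (0:ℝ) ≤ 2),
        ← Real.rpow_natCast (2 : ℝ) m, ← Real.rpow_mul (by norm_num : (0:ℝ) ≤ 2),
        ← Real.rpow_sub (by norm_num : (0:ℝ) < 2)]
      congr 1
      ring
    rw [hxpow]
    field_simp
  simp_rw [hterm]
  set N : ℕ := ⌈r⌉₊ with hN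
  have hbound : ∀ m : ℕ, (m : ℝ) ^ r * x ^ m ≤ (m : ℝ) ^ N * x ^ m := by
    intro m
    have hNne : N ≠ 0 := by rw [hN]; exact (Nat.ceil_pos.mpr hr0).ne'
    rcases Nat.eq_zero_or_pos m with rfl | hm
    · simp [Real.zero_rpow hr0.ne', zero_pow hNne]
    · have h1m : (1 : ℝ) ≤ m := by exact_mod_cast hm
      have : (m : ℝ) ^ r ≤ (m : ℝ) ^ (N : ℝ) :=
        Real.rpow_le_rpow_of_exponent_le h1m (Nat.le_ceil r)
      rw [Real.rpow_natCast] at this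
      exact mul_le_mul_of_nonneg_right this (by positivity)
  calc ∑' m : ℕ, ENNReal.ofReal ((m : ℝ) ^ r * x ^ m)
      ≤ ∑' m : ℕ, ENNReal.ofReal ((m : ℝ) ^ N * x ^ m) :=
        ENNReal.tsum_le_tsum (fun m => ENNReal.ofReal_le_ofReal (hbound m))
    _ = ENNReal.ofReal (∑' m : ℕ, (m : ℝ) ^ N * x ^ m) := by
        rw [ENNReal.ofReal_tsum_of_nonneg (fun m => by positivity)]
        exact summable_pow_mul_geometric_of_norm_lt_one N
          (by rw [Real.norm_eq_abs, abs_of_pos hx0]; exact hx1)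
    _ < ⊤ := ENNReal.ofReal_lt_top

/-- For `0 < p < q ≤ ∞` there is a nonnegative double sequence `(λ_{j,k})` in the Besov
sequence space `b_{p,q}` (i.e. `(∑_j (∑_k λ_{j,k}^p)^{q/p})^{1/q} < ∞`, sup over `j` if
`q = ∞`) such that `sup_{j≥0} 2^{j/p} λ_{j,⌊2^j x⌋} = ∞` for every `x ∈ [1,2)`. -/
theorem exists_bpq_orbit_unbounded (p : ℝ) (q : ℝ≥0∞) (hp : 0 < p)
    (hpq : ENNReal.ofReal p < q) :
    ∃ lam : ℕ → ℕ → ℝ, (∀ j k, 0 ≤ lam j k) ∧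
      (if q = ⊤ then
          ⨆ j : ℕ, ∑' k : ℕ, ENNReal.ofReal (lam j k ^ p)
        else
          ∑' j : ℕ, (∑' k : ℕ, ENNReal.ofReal (lam j k ^ p)) ^ (q.toReal / p)) < ⊤ ∧
      ∀ x ∈ Set.Ico (1 : ℝ) 2, ∀ M : ℝ,
        ∃ j : ℕ, M < (2 : ℝ) ^ ((j : ℝ) / p) * lam j (Nat.floor ((2 : ℝ) ^ j * x)) := by
  refine ⟨blamAux p, ?_, ?_, ?_⟩
  · intro j k
    unfold blamAux
    split_ifs
    · positivity
    · exact le_refl 0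
  · rcases eq_or_ne q ⊤ with hq | hq
    · rw [if_pos hq]
      refine lt_of_le_of_lt (iSup_le fun j => ?_) (ENNReal.one_lt_top)
      rw [blamAux_inner p hp]
      refine ENNReal.ofReal_le_one.mpr ?_
      set m := Nat.log2 j
      rw [div_le_one (by positivity)]
      exact_mod_cast (Nat.lt_two_pow_self (n := m)).le
    · rw [if_neg hq]
      have hpq' : p < q.toReal := (ENNReal.ofReal_lt_iff_lt_toReal hp.le hq).mp hpq
      set r := q.toReal / p with hrdef
      have hr : 1 < r := (one_lt_div hp).mpr hpq'
      have hr0 : 0 < r := lt_trans one_pos hr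
      simp_rw [blamAux_inner p hp]
      have hrw : ∀ j : ℕ, (ENNReal.ofReal ((Nat.log2 j : ℝ) / 2 ^ Nat.log2 j)) ^ r
          = ENNReal.ofReal (((Nat.log2 j : ℝ) / 2 ^ Nat.log2 j) ^ r) := fun j =>
        ENNReal.ofReal_rpow_of_nonneg (by positivity) hr0.le
      simp_rw [hrw]
      rw [regroup (fun m => ENNReal.ofReal (((m : ℝ) / 2 ^ m) ^ r))
        (by simp [Real.zero_rpow hr0.ne'])]
      have hterm : ∀ m : ℕ, (2 : ℝ≥0∞) ^ m * ENNReal.ofReal (((m : ℝ) / 2 ^ m) ^ r)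
          = ENNReal.ofReal ((2 : ℝ) ^ m * ((m : ℝ) / 2 ^ m) ^ r) := by
        intro m
        rw [ENNReal.ofReal_mul (by positivity)]
        congr 1
        rw [ENNReal.ofReal_pow (by norm_num), ENNReal.ofReal_ofNat]
      simp_rw [hterm]
      exact geo_sum r hr
  · rintro x ⟨hx1, hx2⟩ M
    obtain ⟨m0, hm0⟩ := exists_nat_gt (max M 1 ^ p)
    set m := m0 + 1 with hmdef
    set j := Nat.floor ((2 : ℝ) ^ m * x) with hjdef
    have h2m : (0 : ℝ) < 2 ^ m := by positivity
    have hjl : 2 ^ m ≤ j := by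
      apply Nat.le_floor
      push_cast
      nlinarith
    have hju : j < 2 ^ (m + 1) := by
      rw [Nat.floor_lt (by positivity)]
      push_cast
      have h1 : (2 : ℝ) ^ (m + 1) = 2 ^ m * 2 := pow_succ 2 m
      rw [h1]
      have h2 := mul_lt_mul_of_pos_left hx2 h2m
      linarith
    have hlog : Nat.log2 j = m := log2_spec hjl hju
    have hmj : m ≤ j := le_trans (Nat.lt_two_pow_self (n := m)).le hjl
    have hcond : Nat.floor ((2 : ℝ) ^ j * x) / 2 ^ (j - m) = j := by
      have hpow : (2 : ℝ) ^ (j - m) * (2 : ℝ) ^ m = 2 ^ j := by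
        rw [← pow_add, Nat.sub_add_cancel hmj]
      have h1 : (2 : ℝ) ^ j * x / ((2 ^ (j - m) : ℕ) : ℝ) = 2 ^ m * x := by
        rw [div_eq_iff (by positivity)]
        push_cast
        rw [← hpow]
        ring
      calc Nat.floor ((2 : ℝ) ^ j * x) / 2 ^ (j - m)
          = Nat.floor ((2 : ℝ) ^ j * x / ((2 ^ (j - m) : ℕ) : ℝ)) :=
            (Nat.floor_div_natCast _ _).symm
        _ = j := by rw [h1, hjdef]
    refine ⟨j, ?_⟩
    have hlam : blamAux p j (Nat.floor ((2 : ℝ) ^ j * x)) = ((m : ℝ) / 2 ^ j) ^ p⁻¹ := by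
      unfold blamAux
      rw [hlog]
      exact if_pos hcond
    rw [hlam]
    have horbit : (2 : ℝ) ^ ((j : ℝ) / p) * ((m : ℝ) / 2 ^ j) ^ p⁻¹ = (m : ℝ) ^ p⁻¹ := by
      rw [div_eq_mul_inv (j : ℝ) p, Real.rpow_mul (by norm_num), Real.rpow_natCast,
        ← Real.mul_rpow (by positivity) (by positivity)]
      congr 1
      field_simp
    rw [horbit]
    have h1 : (0 : ℝ) < max M 1 := lt_of_lt_of_le one_pos (le_max_right _ _)
    calc M ≤ max M 1 := le_max_left _ _
      _ = ((max M 1) ^ p) ^ p⁻¹ := (Real.rpow_rpow_inv h1.le hp.ne').symm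
      _ < (m : ℝ) ^ p⁻¹ := by
          refine Real.rpow_lt_rpow (by positivity) ?_ (inv_pos.mpr hp)
          refine lt_trans hm0 ?_
          exact_mod_cast Nat.lt_succ_self m0
end

section
/- Let $0 < p < q < \infty$. There exists a sequence $(\xi_k)_{k\geq 0}$ of nonnegative reals with $\sum_{j\geq 1}\big(2^{-j}\sum_{2^j\leq k<2^{j+1}}\xi_k\big)^{q/p} < \infty$ and such that for every $x \in [1,2)$, $\sup_{j\geq 0}\xi_{\lfloor 2^j x\rfloor} = \infty$. -/
noncomputable def xiAux (C k : ℕ) : ℝ :=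
  if 1 ≤ k ∧ C ∣ Nat.log2 (Nat.log2 k) ∧
      2 ^ Nat.log2 k + (Nat.log2 k - 2 ^ Nat.log2 (Nat.log2 k)) *
        2 ^ (Nat.log2 k - Nat.log2 (Nat.log2 k)) ≤ k ∧
      k < 2 ^ Nat.log2 k + (Nat.log2 k - 2 ^ Nat.log2 (Nat.log2 k) + 1) *
        2 ^ (Nat.log2 k - Nat.log2 (Nat.log2 k))
  then ((Nat.log2 (Nat.log2 k) / C : ℕ) : ℝ) else 0

lemma log2_eq_of {b k : ℕ} (h1 : 2^b ≤ k) (h2 : k < 2^(b+1)) : Nat.log2 k = b := by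
  rw [Nat.log2_eq_log_two]
  exact Nat.log_eq_of_pow_le_of_lt_pow h1 h2

lemma xiAux_nonneg (C k : ℕ) : 0 ≤ xiAux C k := by
  unfold xiAux; split
  · positivity
  · exact le_refl _

lemma xiAux_eq_of_mem (C : ℕ) {b k : ℕ} (h1 : 2 ^ b ≤ k) (h2 : k < 2 ^ (b+1)) :
    xiAux C k = if C ∣ Nat.log2 b ∧
        2 ^ b + (b - 2 ^ Nat.log2 b) * 2 ^ (b - Nat.log2 b) ≤ k ∧
        k < 2 ^ b + (b - 2 ^ Nat.log2 b + 1) * 2 ^ (b - Nat.log2 b)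
      then ((Nat.log2 b / C : ℕ) : ℝ) else 0 := by
  have hk1 : 1 ≤ k := le_trans Nat.one_le_two_pow h1
  have hlog : Nat.log2 k = b := log2_eq_of h1 h2
  unfold xiAux
  rw [hlog]
  simp [hk1]

/-- If `C` does not divide `log2 b`, the block sum vanishes. -/
lemma blocksum_eq_zero (C : ℕ) {b : ℕ} (h : ¬ C ∣ Nat.log2 b) :
    ∑ k ∈ Finset.Ico (2^b) (2^(b+1)), xiAux C k = 0 := by
  apply Finset.sum_eq_zero
  intro k hk
  rw [Finset.mem_Ico] at hk
  rw [xiAux_eq_of_mem C hk.1 hk.2]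
  simp [h]

lemma blocksum_le (C : ℕ) (b : ℕ) :
    ∑ k ∈ Finset.Ico (2^b) (2^(b+1)), xiAux C k
      ≤ ((Nat.log2 b / C : ℕ) : ℝ) * 2 ^ (b - Nat.log2 b) := by
  set m := Nat.log2 b with hm
  set n := m / C with hn
  set A := 2 ^ b + (b - 2 ^ m) * 2 ^ (b - m) with hA
  have hB : 2 ^ b + (b - 2 ^ m + 1) * 2 ^ (b - m) = A + 2 ^ (b - m) := by
    rw [hA]; ring
  calc ∑ k ∈ Finset.Ico (2^b) (2^(b+1)), xiAux C k
      ≤ ∑ k ∈ Finset.Ico (2^b) (2^(b+1)),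
          (if k ∈ Finset.Ico A (A + 2 ^ (b - m)) then ((n:ℕ) : ℝ) else 0) := by
        apply Finset.sum_le_sum
        intro k hk
        rw [Finset.mem_Ico] at hk
        rw [xiAux_eq_of_mem C hk.1 hk.2]
        rw [hB]
        split
        · rename_i h
          rw [if_pos]
          rw [Finset.mem_Ico]
          exact ⟨h.2.1, h.2.2⟩
        · split
          · push_cast; positivity
          · exact le_refl _
    _ = ∑ k ∈ Finset.Ico (2^b) (2^(b+1)) ∩ Finset.Ico A (A + 2 ^ (b - m)), ((n:ℕ):ℝ) :=
        Finset.sum_ite_mem _ _ _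
    _ ≤ ((n:ℕ):ℝ) * 2 ^ (b - m) := by
        rw [Finset.sum_const, nsmul_eq_mul, mul_comm]
        apply mul_le_mul_of_nonneg_left _ (by positivity)
        have h1 : ((Finset.Ico (2^b) (2^(b+1)) ∩ Finset.Ico A (A + 2 ^ (b - m))).card : ℝ)
            ≤ ((Finset.Ico A (A + 2 ^ (b - m))).card : ℝ) := by
          exact_mod_cast Finset.card_le_card (Finset.inter_subset_right)
        rw [Nat.card_Ico] at h1
        simpa using h1

/-- Core real inequality: `(n / 2^(C*n))^r ≤ (2^(C*n))^(-(r+1)/2)` when `2r ≤ C(r-1)`. -/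
lemma core_ineq {r : ℝ} (hr : 1 < r) {C n : ℕ} (hC : 2 * r ≤ (C:ℝ) * (r - 1)) :
    ((n : ℝ) / 2 ^ (C * n)) ^ r ≤ ((2:ℝ) ^ (C * n)) ^ (-((r+1)/2)) := by
  have hr0 : (0:ℝ) < r := lt_trans one_pos hr
  have h2 : (0:ℝ) < 2 ^ (C*n) := by positivity
  rcases Nat.eq_zero_or_pos n with hn | hn
  · subst hn
    simp [Real.zero_rpow (ne_of_gt hr0)]
  · rw [Real.div_rpow (by positivity) (le_of_lt h2)]
    rw [div_le_iff₀ (by positivity)]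
    rw [← Real.rpow_natCast (2:ℝ) (C*n),
      ← Real.rpow_mul (by norm_num), ← Real.rpow_mul (by norm_num), ← Real.rpow_add two_pos]
    have h1 : (n:ℝ) ^ r ≤ ((2:ℝ) ^ (n:ℝ)) ^ r := by
      apply Real.rpow_le_rpow (Nat.cast_nonneg n) _ (le_of_lt hr0)
      rw [Real.rpow_natCast]
      exact_mod_cast (Nat.lt_two_pow_self (n := n)).le
    refine le_trans h1 ?_
    rw [← Real.rpow_mul (by norm_num)]
    rw [Real.rpow_le_rpow_left_iff one_lt_two]
    have hcn : ((C * n : ℕ) : ℝ) = (C:ℝ) * (n:ℝ) := by push_cast; ring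
    rw [hcn]
    have : (C:ℝ) * (n:ℝ) * (-((r+1)/2)) + (C:ℝ)*(n:ℝ) * r = (C:ℝ)*(n:ℝ)*((r-1)/2) := by ring
    rw [this]
    have hn' : (1:ℝ) ≤ (n:ℝ) := by exact_mod_cast hn
    nlinarith [Nat.cast_nonneg (α := ℝ) n]

lemma term_le {r : ℝ} (hr : 1 < r) {C : ℕ} (hC : 2 * r ≤ (C:ℝ) * (r - 1)) (j : ℕ) :
    ((1 / (2:ℝ)^(j+1)) * ∑ k ∈ Finset.Ico (2^(j+1)) (2^(j+2)), xiAux C k) ^ r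
      ≤ (2:ℝ) ^ ((r+1)/2) * (((j+1:ℕ)):ℝ) ^ (-((r+1)/2)) := by
  have hr0 : (0:ℝ) < r := lt_trans one_pos hr
  have hs0 : (0:ℝ) < (r+1)/2 := by linarith
  set b := j + 1 with hb
  set m := Nat.log2 b with hm
  have hb1 : 1 ≤ b := Nat.le_add_left 1 j
  have hb0 : b ≠ 0 := Nat.one_le_iff_ne_zero.mp hb1
  have hbpos : (0:ℝ) < (b:ℝ) := by exact_mod_cast hb1
  have RHSnn : (0:ℝ) ≤ (2:ℝ) ^ ((r+1)/2) * ((b:ℕ):ℝ) ^ (-((r+1)/2)) := by positivity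
  have hIco : Finset.Ico (2^(j+1)) (2^(j+2)) = Finset.Ico (2^b) (2^(b+1)) := rfl
  rw [hIco]
  by_cases hdvd : C ∣ m
  · -- main case
    set n := m / C with hn
    have hmn : C * n = m := Nat.mul_div_cancel' hdvd
    have hmb : m ≤ b := le_trans (Nat.lt_two_pow_self (n := m)).le (Nat.log2_self_le hb0)
    have h2mb : 2 ^ m ≤ b := Nat.log2_self_le hb0
    have hS0 : 0 ≤ ∑ k ∈ Finset.Ico (2^b) (2^(b+1)), xiAux C k :=
      Finset.sum_nonneg fun k _ => xiAux_nonneg C k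
    have hbase : (1 / (2:ℝ)^b) * ∑ k ∈ Finset.Ico (2^b) (2^(b+1)), xiAux C k
        ≤ (n:ℝ) / 2 ^ m := by
      have h1 := blocksum_le C b
      rw [← hm, ← hn] at h1
      have h2 : (1 / (2:ℝ)^b) * ((n:ℝ) * 2 ^ (b - m)) = (n:ℝ) / 2 ^ m := by
        have : (2:ℝ) ^ (b - m) * 2 ^ m = 2 ^ b := by
          rw [← pow_add, Nat.sub_add_cancel hmb]
        field_simp
        nlinarith [this]
      rw [← h2]
      apply mul_le_mul_of_nonneg_left h1 (by positivity)
    calc ((1 / (2:ℝ)^b) * ∑ k ∈ Finset.Ico (2^b) (2^(b+1)), xiAux C k) ^ r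
        ≤ ((n:ℝ) / 2 ^ m) ^ r := by
          apply Real.rpow_le_rpow (by positivity) hbase (le_of_lt hr0)
      _ ≤ ((2:ℝ) ^ m) ^ (-((r+1)/2)) := by
          rw [← hmn]; exact core_ineq hr hC
      _ ≤ (2:ℝ) ^ ((r+1)/2) * ((b:ℕ):ℝ) ^ (-((r+1)/2)) := by
          have hble : (b:ℝ) ≤ 2 * 2 ^ m := by
            have := @Nat.lt_log2_self b
            have : b < 2 ^ (m + 1) := this
            calc (b:ℝ) ≤ ((2 ^ (m+1) : ℕ) : ℝ) := by exact_mod_cast this.le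
              _ = 2 * 2 ^ m := by push_cast [pow_succ]; ring
          have hhalf : (b:ℝ) / 2 ≤ 2 ^ m := by linarith
          have h1 : ((2:ℝ) ^ m) ^ (-((r+1)/2)) ≤ ((b:ℝ)/2) ^ (-((r+1)/2)) := by
            apply Real.rpow_le_rpow_of_nonpos (by positivity) hhalf (by linarith)
          refine le_trans h1 ?_
          rw [Real.div_rpow hbpos.le (by norm_num)]
          rw [div_le_iff₀ (by positivity)]
          rw [Real.rpow_neg (by norm_num : (0:ℝ) ≤ 2)]
          rw [mul_comm ((2:ℝ)^((r+1)/2)) _, mul_assoc]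
          rw [mul_inv_cancel₀ (by positivity)]
          simp
  · rw [blocksum_eq_zero C hdvd, mul_zero, Real.zero_rpow (ne_of_gt hr0)]
    exact RHSnn

lemma summable_majorant {s : ℝ} (hs : 1 < s) :
    Summable (fun j : ℕ => (2:ℝ) ^ s * (((j+1:ℕ)):ℝ) ^ (-s)) := by
  have h : Summable (fun j : ℕ => ((j:ℝ)) ^ (-s)) :=
    Real.summable_nat_rpow.mpr (by linarith)
  exact (h.comp_injective Nat.succ_injective).mul_left _

lemma xiAux_orbit {C : ℕ} (hC : 0 < C) {x : ℝ} (hx1 : 1 ≤ x) (hx2 : x < 2)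
    {n : ℕ} (hn : 1 ≤ n) :
    xiAux C (Nat.floor ((2:ℝ) ^ (2 ^ (C*n) + Nat.floor ((x-1) * 2^(C*n))) * x)) = n := by
  set m := C * n with hm
  set i := Nat.floor ((x-1) * 2^m) with hi
  set b := 2 ^ m + i with hb
  set k := Nat.floor ((2:ℝ) ^ b * x) with hk
  have hx0 : (0:ℝ) ≤ x - 1 := by linarith
  have hilt : i < 2 ^ m := by
    rw [hi]
    apply Nat.floor_lt (by positivity) |>.mpr
    calc (x-1) * 2^m < 1 * 2^m := by
          apply mul_lt_mul_of_pos_right (by linarith) (by positivity)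
      _ = ((2^m : ℕ) : ℝ) := by push_cast; ring
  have hmb : m ≤ b := le_trans (Nat.lt_two_pow_self (n := m)).le (Nat.le_add_right _ _)
  have hpow : (2:ℝ) ^ m * 2 ^ (b - m) = 2 ^ b := by
    rw [← pow_add, Nat.add_sub_cancel' hmb]
  have hfl : (i:ℝ) ≤ (x-1) * 2^m := Nat.floor_le (by positivity)
  have hfu : (x-1) * 2^m < (i:ℝ) + 1 := Nat.lt_floor_add_one _
  have hxb : (0:ℝ) ≤ (2:ℝ)^b * x := by positivity
  -- lower bound on k
  have hAk : 2 ^ b + i * 2 ^ (b - m) ≤ k := by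
    rw [hk]
    apply Nat.le_floor
    push_cast
    have : (i:ℝ) * 2 ^ (b-m) ≤ (x-1) * 2^b := by
      calc (i:ℝ) * 2 ^ (b-m) ≤ ((x-1) * 2^m) * 2 ^ (b-m) :=
            mul_le_mul_of_nonneg_right hfl (by positivity)
        _ = (x-1) * 2^b := by rw [mul_assoc, hpow]
    nlinarith
  have hkB : k < 2 ^ b + (i + 1) * 2 ^ (b - m) := by
    have h1 : ((2:ℝ)^b) * x < ((2 ^ b + (i + 1) * 2 ^ (b - m) : ℕ) : ℝ) := by
      push_cast
      have : (x-1) * 2^b < ((i:ℝ)+1) * 2 ^ (b-m) := by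
        calc (x-1) * 2^b = ((x-1) * 2^m) * 2 ^ (b-m) := by rw [mul_assoc, hpow]
          _ < ((i:ℝ)+1) * 2 ^ (b-m) :=
            mul_lt_mul_of_pos_right hfu (by positivity)
      nlinarith
    exact Nat.floor_lt hxb |>.mpr h1
  -- k is in block b
  have hk1 : 2 ^ b ≤ k := le_trans (Nat.le_add_right _ _) hAk
  have hk2 : k < 2 ^ (b + 1) := by
    apply lt_of_lt_of_le hkB
    have : (i + 1) * 2 ^ (b - m) ≤ 2 ^ m * 2 ^ (b - m) :=
      Nat.mul_le_mul_right _ hilt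
    calc 2 ^ b + (i + 1) * 2 ^ (b - m) ≤ 2 ^ b + 2 ^ m * 2 ^ (b - m) := by omega
      _ = 2 ^ b + 2 ^ b := by rw [← pow_add, Nat.add_sub_cancel' hmb]
      _ = 2 ^ (b+1) := by ring
  have hlogb : Nat.log2 b = m := by
    apply log2_eq_of (Nat.le_add_right _ _)
    have : b < 2^m + 2^m := by omega
    calc b < 2^m + 2^m := this
      _ = 2^(m+1) := by ring
  rw [xiAux_eq_of_mem C hk1 hk2, hlogb]
  rw [if_pos]
  · rw [hm, Nat.mul_div_cancel_left n hC]
  · refine ⟨Dvd.intro n rfl, ?_, ?_⟩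
    · have : b - 2 ^ m = i := by omega
      rw [this]; exact hAk
    · have : b - 2 ^ m = i := by omega
      rw [this]; exact hkB


/-- For `0 < p < q < ∞` there is a nonnegative sequence `(ξ_k)` with
`∑_{j≥1} (2^{-j} ∑_{2^j ≤ k < 2^{j+1}} ξ_k)^{q/p} < ∞` whose dyadic orbits
`(ξ_{⌊2^j x⌋})_j` are unbounded for every `x ∈ [1,2)`. -/
theorem exists_block_qp_summable_orbit_unbounded (p q : ℝ) (hp : 0 < p) (hpq : p < q) :
    ∃ ξ : ℕ → ℝ, (∀ k, 0 ≤ ξ k) ∧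
      Summable (fun j : ℕ =>
        ((1 / (2 : ℝ) ^ (j + 1)) * ∑ k ∈ Finset.Ico (2 ^ (j + 1)) (2 ^ (j + 2)), ξ k) ^ (q / p)) ∧
      ∀ x ∈ Set.Ico (1 : ℝ) 2, ∀ M : ℝ, ∃ j : ℕ, M < ξ (Nat.floor ((2 : ℝ) ^ j * x)) := by
  set r := q / p with hr
  have hr1 : 1 < r := (one_lt_div hp).mpr hpq
  set C : ℕ := Nat.ceil (2 * r / (r - 1)) + 1 with hCdef
  have hC0 : 0 < C := Nat.succ_pos _
  have hC : 2 * r ≤ (C:ℝ) * (r - 1) := by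
    have h1 : 2 * r / (r - 1) ≤ (C:ℝ) := by
      calc 2 * r / (r - 1) ≤ (Nat.ceil (2 * r / (r - 1)) : ℝ) := Nat.le_ceil _
        _ ≤ (C:ℝ) := by exact_mod_cast Nat.le_succ _
    calc 2 * r = (2 * r / (r - 1)) * (r - 1) := by
          rw [div_mul_cancel₀]; linarith
      _ ≤ (C:ℝ) * (r - 1) := mul_le_mul_of_nonneg_right h1 (by linarith)
  refine ⟨xiAux C, xiAux_nonneg C, ?_, ?_⟩
  · apply Summable.of_nonneg_of_le
      (fun j => Real.rpow_nonneg
        (mul_nonneg (by positivity)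
          (Finset.sum_nonneg fun k _ => xiAux_nonneg C k)) r)
      (term_le hr1 hC)
      (summable_majorant (by linarith : 1 < (r+1)/2))
  · rintro x ⟨hx1, hx2⟩ M
    set n : ℕ := Nat.ceil M + 1 with hn
    refine ⟨2 ^ (C*n) + Nat.floor ((x-1) * 2^(C*n)), ?_⟩
    rw [xiAux_orbit hC0 hx1 hx2 (Nat.le_add_left 1 _)]
    calc M ≤ (Nat.ceil M : ℝ) := Nat.le_ceil M
      _ < (n : ℝ) := by exact_mod_cast Nat.lt_succ_self _
end
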